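/- Let F_q be a finite field and P_1, P_2 ⊂ [0, q−2]^m integral convex polytopes (or more generally finite sets of lattice points) related by a unimodular integer affine transformation T(x) = Mx + λ with M ∈ GL(m,Z), λ ∈ Z^m, T(P_1 ∩ Z^m) = P_2 ∩ Z^m. Then the toric codes C_{P_1}(F_q) and C_{P_2}(F_q) are monomially equivalent: there is a permutation σ of (F_q^*)^m and nonzero scalars (c_p)_{p ∈ (F_q^*)^m} such that the map sending a codeword (w_p) to (c_p · w_{σ(p)}) is a linear bijection from C_{P_1} to C_{P_2}. -/

import Mathlib

/-- The monomial transformation of `F^ι` determined by nonzero scalars `c` and a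
permutation `σ` of the coordinates. -/
def monomialMap {F : Type*} [Field F] {ι : Type*} (c : ι → Fˣ) (σ : Equiv.Perm ι) :
    (ι → F) →ₗ[F] (ι → F) where
  toFun w := fun i => (c i : F) * w (σ i)
  map_add' := by intro x y; funext i; simp [mul_add]
  map_smul' := by intro r x; funext i; simp [smul_eq_mul]; ring

section aux
variable {G : Type*} [CommGroup G] {m : ℕ}

lemma zpow_finset_sum {ι : Type*} (s : Finset ι) (a : G) (f : ι → ℤ) :
    a ^ (∑ i ∈ s, f i) = ∏ i ∈ s, a ^ f i := by
  classical
  induction s using Finset.induction with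
  | empty => simp
  | insert _ _ h ih => rw [Finset.sum_insert h, Finset.prod_insert h, zpow_add, ih]

/-- the multiplicative action of an integer matrix on the torus -/
def tauM (M : Matrix (Fin m) (Fin m) ℤ) (p : Fin m → G) : Fin m → G :=
  fun j => ∏ i, p i ^ M i j

lemma tauM_tauM (M N : Matrix (Fin m) (Fin m) ℤ) (p : Fin m → G) :
    tauM N (tauM M p) = tauM (M * N) p := by
  funext j
  simp only [tauM, Matrix.mul_apply, ← Finset.prod_zpow]
  rw [Finset.prod_comm]
  congr 1; funext k
  rw [zpow_finset_sum]
  congr 1; funext i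
  rw [← zpow_mul]

lemma tauM_one (p : Fin m → G) : tauM (1 : Matrix (Fin m) (Fin m) ℤ) p = p := by
  funext j
  rw [tauM, Finset.prod_eq_single j]
  · simp [Matrix.one_apply]
  · intro i _ hij; simp [Matrix.one_apply, hij]
  · simp

lemma tauM_prod (M : Matrix (Fin m) (Fin m) ℤ) (e : Fin m → ℤ) (p : Fin m → G) :
    ∏ j, (tauM M p) j ^ e j = ∏ i, p i ^ (M.mulVec e) i := by
  simp only [tauM, ← Finset.prod_zpow, Matrix.mulVec, dotProduct]
  rw [Finset.prod_comm]
  congr 1; funext k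
  rw [zpow_finset_sum]
  congr 1; funext i
  rw [← zpow_mul]

end aux

theorem lattice_equiv_gives_monomially_equivalent_codes
    {F : Type*} [Field F] [Fintype F] (q m : ℕ) (hq : Fintype.card F = q)
    (P₁ P₂ : Finset (Fin m → ℤ))
    (hP₁ : ∀ e ∈ P₁, ∀ i, 0 ≤ e i ∧ e i ≤ (q : ℤ) - 2)
    (hP₂ : ∀ e ∈ P₂, ∀ i, 0 ≤ e i ∧ e i ≤ (q : ℤ) - 2)
    (M : Matrix (Fin m) (Fin m) ℤ) (hM : M.det = 1 ∨ M.det = -1) (lam : Fin m → ℤ)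
    (hT : P₁.image (fun e => M.mulVec e + lam) = P₂) :
    ∃ (σ : Equiv.Perm (Fin m → Fˣ)) (c : (Fin m → Fˣ) → Fˣ),
      Submodule.map (monomialMap c σ)
          (Submodule.span F {w : (Fin m → Fˣ) → F |
            ∃ e ∈ P₁, w = fun p => ((∏ i, p i ^ e i : Fˣ) : F)}) =
        Submodule.span F {w : (Fin m → Fˣ) → F |
            ∃ e ∈ P₂, w = fun p => ((∏ i, p i ^ e i : Fˣ) : F)} := by
  have hdet : IsUnit M.det := by
    rcases hM with h | h <;> rw [h]
    · exact isUnit_one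
    · exact isUnit_one.neg
  have : Invertible M := M.invertibleOfIsUnitDet hdet
  refine ⟨⟨tauM M, tauM (⅟M), ?_, ?_⟩, fun p => ∏ i, p i ^ lam i, ?_⟩
  · intro p
    rw [tauM_tauM, mul_invOf_self, tauM_one]
  · intro p
    rw [tauM_tauM, invOf_mul_self, tauM_one]
  · rw [Submodule.map_span]
    congr 1
    ext w
    constructor
    · rintro ⟨v, ⟨e, he, rfl⟩, rfl⟩
      refine ⟨M.mulVec e + lam, ?_, ?_⟩
      · rw [← hT]; exact Finset.mem_image_of_mem _ he
      · funext p
        show ((∏ i, p i ^ lam i : Fˣ) : F) * ((∏ i, (tauM M p) i ^ e i : Fˣ) : F)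
          = ((∏ i, p i ^ (M.mulVec e + lam) i : Fˣ) : F)
        rw [← Units.val_mul]
        congr 1
        rw [tauM_prod]
        rw [← Finset.prod_mul_distrib]
        congr 1; funext i
        rw [Pi.add_apply, zpow_add, mul_comm]
    · rintro ⟨e', he', rfl⟩
      rw [← hT] at he'
      obtain ⟨e, he, rfl⟩ := Finset.mem_image.mp he'
      refine ⟨fun p => ((∏ i, p i ^ e i : Fˣ) : F), ⟨e, he, rfl⟩, ?_⟩
      funext p
      show ((∏ i, p i ^ lam i : Fˣ) : F) * ((∏ i, (tauM M p) i ^ e i : Fˣ) : F)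
        = ((∏ i, p i ^ (M.mulVec e + lam) i : Fˣ) : F)
      rw [← Units.val_mul]
      congr 1
      rw [tauM_prod, ← Finset.prod_mul_distrib]
      congr 1; funext i
      rw [Pi.add_apply, zpow_add, mul_comm]
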